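/- If f(z) = ∑_{n=0}^∞ a_n z^n is analytic on the unit disk with |f| ≤ 1, then for every n ≥ 1, |a_n| ≤ 1 − |a_0|². -/

import Mathlib

open Metric

noncomputable def ps (a : ℕ → ℂ) : FormalMultilinearSeries ℂ ℂ ℂ :=
  fun n => a n • ContinuousMultilinearMap.mkPiAlgebraFin ℂ n ℂ

lemma ps_apply (a : ℕ → ℂ) (n : ℕ) (z : ℂ) : (ps a n) (fun _ => z) = a n * z ^ n := by
  simp [ps, List.prod_ofFn]

lemma ps_norm (a : ℕ → ℂ) (n : ℕ) : ‖ps a n‖ = ‖a n‖ := by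
  rw [ps, norm_smul (a n) (ContinuousMultilinearMap.mkPiAlgebraFin ℂ n ℂ),
    ContinuousMultilinearMap.norm_mkPiAlgebraFin]
  simp

lemma ps_coeff (a : ℕ → ℂ) (n : ℕ) : (ps a).coeff n = a n := by
  show (ps a n) (fun _ => 1) = a n
  rw [ps_apply]; ring

lemma one_le_radius {f : ℂ → ℂ} {a : ℕ → ℂ}
    (hexp : ∀ z ∈ ball (0:ℂ) 1, HasSum (fun n => a n * z ^ n) (f z)) :
    1 ≤ (ps a).radius := by
  apply ENNReal.le_of_forall_nnreal_lt
  intro r hr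
  have hr1 : (r:ℝ) < 1 := by exact_mod_cast hr
  have hz : ((r:ℝ):ℂ) ∈ ball (0:ℂ) 1 := by
    simp [mem_ball_zero_iff, Complex.norm_real, abs_of_nonneg r.2, hr1]
  have h0 : Filter.Tendsto (fun n => a n * ((r:ℝ):ℂ) ^ n) Filter.atTop (nhds 0) :=
    (hexp _ hz).summable.tendsto_atTop_zero
  apply (ps a).le_radius_of_isBigO
  have : (fun n => a n * ((r:ℝ):ℂ) ^ n) =O[Filter.atTop] (fun _ => (1:ℝ)) :=
    h0.isBigO_one ℝ
  refine Asymptotics.IsBigO.congr' this.norm_left ?_ (by rfl)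
  filter_upwards with n
  rw [ps_norm]
  simp [norm_mul, norm_pow, Complex.norm_real, abs_of_nonneg r.2]

lemma hasFPS {f : ℂ → ℂ} {a : ℕ → ℂ}
    (hexp : ∀ z ∈ ball (0:ℂ) 1, HasSum (fun n => a n * z ^ n) (f z)) :
    HasFPowerSeriesOnBall f (ps a) 0 1 where
  r_le := one_le_radius hexp
  r_pos := one_pos
  hasSum := by
    intro y hy
    rw [EMetric.mem_ball, edist_zero_right] at hy
    have hy' : y ∈ ball (0:ℂ) 1 := by
      rw [mem_ball_zero_iff]
      simpa [← ofReal_norm, ENNReal.ofReal_lt_one] using hy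
    simpa [ps_apply, ps_coeff, mul_comm] using hexp y hy'

lemma f_zero {f : ℂ → ℂ} {a : ℕ → ℂ}
    (hexp : ∀ z ∈ ball (0:ℂ) 1, HasSum (fun n => a n * z ^ n) (f z)) :
    f 0 = a 0 := by
  have h := hexp 0 (by simp)
  have h2 : HasSum (fun n => a n * (0:ℂ) ^ n) (a 0) := by
    convert hasSum_single (f := fun n => a n * (0:ℂ) ^ n) 0 ?_ using 1
    · simp
    · intro n hn
      simp [zero_pow hn]
  exact h.unique h2

lemma deriv_a1 {f : ℂ → ℂ} {a : ℕ → ℂ}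
    (hexp : ∀ z ∈ ball (0:ℂ) 1, HasSum (fun n => a n * z ^ n) (f z)) :
    deriv f 0 = a 1 := by
  have h := (hasFPS hexp).hasFPowerSeriesAt.deriv
  rw [h]; exact ps_coeff a 1

lemma diffOn {f : ℂ → ℂ} {a : ℕ → ℂ}
    (hexp : ∀ z ∈ ball (0:ℂ) 1, HasSum (fun n => a n * z ^ n) (f z)) :
    DifferentiableOn ℂ f (ball (0:ℂ) 1) := by
  have e : Metric.eball (0:ℂ) 1 = ball (0:ℂ) 1 := by
    have e2 := @Metric.emetric_ball_nnreal ℂ _ (0:ℂ) 1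
    simpa using e2
  have := (hasFPS hexp).differentiableOn
  rwa [e] at this

lemma normSq_key (c w : ℂ) (hw : Complex.normSq w ≤ 1) (hc : Complex.normSq c ≤ 1) :
    Complex.normSq (w - c) ≤ Complex.normSq (1 - (starRingEnd ℂ) c * w) := by
  have key : Complex.normSq (1 - (starRingEnd ℂ) c * w) - Complex.normSq (w - c)
      = (1 - Complex.normSq w) * (1 - Complex.normSq c) := by
    simp only [Complex.normSq_apply, Complex.sub_re, Complex.sub_im, Complex.mul_re,
      Complex.mul_im, Complex.one_re, Complex.one_im, Complex.conj_re, Complex.conj_im]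
    ring
  nlinarith [key]

lemma base {f : ℂ → ℂ} {a : ℕ → ℂ}
    (hexp : ∀ z ∈ ball (0:ℂ) 1, HasSum (fun n => a n * z ^ n) (f z))
    (hb : ∀ z ∈ ball (0:ℂ) 1, ‖f z‖ ≤ 1) :
    ‖a 1‖ ≤ 1 - ‖a 0‖ ^ 2 := by
  have hf0 : f 0 = a 0 := f_zero hexp
  have hd : DifferentiableOn ℂ f (ball (0:ℂ) 1) := diffOn hexp
  have ha0 : ‖a 0‖ ≤ 1 := by
    have := hb 0 (by simp); rwa [hf0] at this
  rcases eq_or_lt_of_le ha0 with heq | hlt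
  · -- |a 0| = 1 : f is constant by max modulus, so a 1 = 0
    have hmax : IsMaxOn (norm ∘ f) (ball (0:ℂ) 1) 0 := by
      intro z hz
      simp only [Function.comp_apply, Set.mem_setOf_eq, hf0, ← heq]
      calc ‖f z‖ ≤ 1 := hb z hz
        _ = ‖a 0‖ := heq.symm
    have hconst := Complex.eqOn_of_isPreconnected_of_isMaxOn_norm
      (convex_ball (0:ℂ) 1).isPreconnected isOpen_ball hd (by simp) hmax
    have hev : f =ᶠ[nhds (0:ℂ)] fun _ => f 0 := by
      filter_upwards [isOpen_ball.mem_nhds (by simp : (0:ℂ) ∈ ball (0:ℂ) 1)] with z hz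
      exact hconst hz
    have hder0 : deriv f 0 = 0 := by
      rw [hev.deriv_eq]; exact deriv_const _ _
    rw [← deriv_a1 hexp, hder0, norm_zero, heq]; norm_num
  · -- |a 0| < 1
    set c := a 0 with hc
    set F : ℂ → ℂ := fun z => (f z - c) * (1 - (starRingEnd ℂ) c * f z)⁻¹ with hF
    have hden : ∀ z ∈ ball (0:ℂ) 1, 1 - (starRingEnd ℂ) c * f z ≠ 0 := by
      intro z hz h0
      have h1 : (starRingEnd ℂ) c * f z = 1 := by linear_combination -h0
      have h2 : ‖(starRingEnd ℂ) c * f z‖ < 1 := by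
        rw [norm_mul, Complex.norm_conj]
        calc ‖c‖ * ‖f z‖ ≤ ‖c‖ * 1 :=
              mul_le_mul_of_nonneg_left (hb z hz) (norm_nonneg c)
          _ < 1 := by rw [mul_one]; exact hlt
      rw [h1] at h2; simp at h2
    have hFd : DifferentiableOn ℂ F (ball (0:ℂ) 1) := by
      apply DifferentiableOn.mul
      · exact hd.sub (differentiableOn_const c)
      · exact DifferentiableOn.inv
          ((differentiableOn_const 1).sub ((differentiableOn_const _).mul hd)) hden
    have hFle : ∀ z ∈ ball (0:ℂ) 1, ‖F z‖ ≤ 1 := by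
      intro z hz
      have hfz : Complex.normSq (f z) ≤ 1 := by
        rw [← Complex.sq_norm]
        nlinarith [hb z hz, norm_nonneg (f z)]
      have hcn : Complex.normSq c ≤ 1 := by
        rw [← Complex.sq_norm]
        nlinarith [norm_nonneg c]
      have h1 := normSq_key c (f z) hfz hcn
      have h2 : ‖f z - c‖ ≤ ‖1 - (starRingEnd ℂ) c * f z‖ := by
        rw [Complex.norm_def, Complex.norm_def]
        exact Real.sqrt_le_sqrt h1
      have hpos : 0 < ‖1 - (starRingEnd ℂ) c * f z‖ :=
        norm_pos_iff.mpr (hden z hz)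
      show ‖(f z - c) * (1 - (starRingEnd ℂ) c * f z)⁻¹‖ ≤ 1
      rw [norm_mul, norm_inv, ← div_eq_mul_inv, div_le_one hpos]
      exact h2
    -- derivative of F at 0
    have hmem0 : (0:ℂ) ∈ ball (0:ℂ) 1 := by simp
    have hfd0 : HasDerivAt f (a 1) 0 := by
      have hda : DifferentiableAt ℂ f 0 := hd.differentiableAt (isOpen_ball.mem_nhds hmem0)
      have h := hda.hasDerivAt
      rwa [deriv_a1 hexp] at h
    have h2 : HasDerivAt (fun z => 1 - (starRingEnd ℂ) c * f z)
        (-((starRingEnd ℂ) c * a 1)) 0 := (hfd0.const_mul _).const_sub 1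
    have h3 := h2.inv (hden 0 hmem0)
    have h4 := (hfd0.sub_const c).mul h3
    have hF0 : F 0 = 0 := by
      show (f 0 - c) * _ = 0
      rw [hf0]; simp
    have hFderiv : deriv F 0 = a 1 * (1 - (starRingEnd ℂ) c * c)⁻¹ := by
      rw [show F = (fun x => f x - c) * (fun z => 1 - (starRingEnd ℂ) c * f z)⁻¹ from rfl, h4.deriv, hf0]
      simp [hf0]
    have hpos : (0:ℝ) < 1 - ‖c‖ ^ 2 := by
      nlinarith [norm_nonneg c]
    have habs : ‖deriv F 0‖ = ‖a 1‖ / (1 - ‖c‖ ^ 2) := by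
      rw [hFderiv, norm_mul, norm_inv, ← div_eq_mul_inv]
      congr 1
      have e1 : (starRingEnd ℂ) c * c = (Complex.normSq c : ℂ) := by
        rw [mul_comm, Complex.mul_conj]
      rw [e1, ← Complex.ofReal_one, ← Complex.ofReal_sub, Complex.norm_real, Real.norm_eq_abs,
        Complex.sq_norm, abs_of_nonneg]
      rw [Complex.sq_norm] at hpos
      linarith
    have key : ∀ R : ℝ, 1 < R → ‖deriv F 0‖ ≤ R := by
      intro R hR
      have hmaps : Set.MapsTo F (ball (0:ℂ) 1) (closedBall (F 0) R) := by
        intro z hz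
        rw [hF0, mem_closedBall_zero_iff]
        exact le_trans (hFle z hz) hR.le
      have := Complex.norm_deriv_le_div_of_mapsTo_ball hFd hmaps one_pos
      simpa using this
    have final : ∀ ε : ℝ, 0 < ε → ‖a 1‖ ≤ (1 - ‖c‖ ^ 2) + ε := by
      intro ε hε
      have hR : (1:ℝ) < 1 + ε / (1 - ‖c‖ ^ 2) := by
        have : 0 < ε / (1 - ‖c‖ ^ 2) := div_pos hε hpos
        linarith
      have hk := key _ hR
      rw [habs, div_le_iff₀ hpos] at hk
      calc ‖a 1‖ ≤ (1 + ε / (1 - ‖c‖ ^ 2)) * (1 - ‖c‖ ^ 2) := hk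
        _ = (1 - ‖c‖ ^ 2) + ε := by field_simp
    exact le_of_forall_pos_le_add final

lemma rootsum (n : ℕ) (hn : n ≠ 0) (k : ℕ) :
    ∑ j ∈ Finset.range n, (Complex.exp (2 * Real.pi * Complex.I / n) ^ k) ^ j
      = if n ∣ k then (n : ℂ) else 0 := by
  have hprim := Complex.isPrimitiveRoot_exp n hn
  set ζ := Complex.exp (2 * Real.pi * Complex.I / n) ^ k with hζ
  by_cases hdvd : n ∣ k
  · have h1 : ζ = 1 := (hprim.pow_eq_one_iff_dvd k).mpr hdvd
    simp [h1, hdvd]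
  · have h1 : ζ ≠ 1 := fun h => hdvd ((hprim.pow_eq_one_iff_dvd k).mp h)
    have h2 : ζ ^ n = 1 := by
      rw [hζ, ← pow_mul, mul_comm k n, pow_mul, hprim.pow_eq_one, one_pow]
    rw [geom_sum_eq h1, h2]
    simp [hdvd]

/-- Schwarz–Pick coefficient bound: if `f = ∑ aₙ zⁿ` is analytic on the unit disk with
`|f| ≤ 1`, then `|aₙ| ≤ 1 - |a₀|²` for all `n ≥ 1`. -/
theorem coeff_bound (f : ℂ → ℂ) (a : ℕ → ℂ)
    (hexp : ∀ z ∈ ball (0 : ℂ) 1, HasSum (fun n => a n * z ^ n) (f z))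
    (hana : AnalyticOn ℂ f (ball (0 : ℂ) 1))
    (hb : ∀ z ∈ ball (0 : ℂ) 1, ‖f z‖ ≤ 1) :
    ∀ n : ℕ, 1 ≤ n → ‖a n‖ ≤ 1 - ‖a 0‖ ^ 2 := by
  intro n hn
  have hn0 : n ≠ 0 := by omega
  have hnpos : (0:ℝ) < n := by exact_mod_cast Nat.pos_of_ne_zero hn0
  set b : ℕ → ℂ := fun k => a (n * k) with hbdef
  have hinj : Function.Injective (fun m : ℕ => n * m) := fun x y hxy => by
    simpa [hn0] using hxy
  -- nth roots exist inside the ball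
  have hroot : ∀ w ∈ ball (0:ℂ) 1, ∃ z ∈ ball (0:ℂ) 1, z ^ n = w := by
    intro w hw
    obtain ⟨z, hz⟩ := IsAlgClosed.exists_pow_nat_eq w (Nat.pos_of_ne_zero hn0)
    refine ⟨z, ?_, hz⟩
    rw [mem_ball_zero_iff] at hw ⊢
    by_contra hcon
    push_neg at hcon
    have h1 : (1:ℝ) ≤ ‖z‖ ^ n := by
      calc (1:ℝ) = 1 ^ n := (one_pow n).symm
        _ ≤ ‖z‖ ^ n := pow_le_pow_left₀ (by norm_num) hcon n
    rw [← norm_pow, hz] at h1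
    linarith
  -- summability of the subseries
  have hsummable : ∀ w ∈ ball (0:ℂ) 1, Summable (fun k => b k * w ^ k) := by
    intro w hw
    obtain ⟨z, hz1, hz2⟩ := hroot w hw
    have h1 := (hexp z hz1).summable
    have h2 := h1.comp_injective hinj
    refine h2.congr fun m => ?_
    show a (n * m) * z ^ (n * m) = b m * w ^ m
    rw [pow_mul, hz2]
  set h : ℂ → ℂ := fun w => ∑' k, b k * w ^ k with hhdef
  have hexp_h : ∀ w ∈ ball (0:ℂ) 1, HasSum (fun k => b k * w ^ k) (h w) :=
    fun w hw => (hsummable w hw).hasSum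
  -- boundedness of h
  have hb_h : ∀ w ∈ ball (0:ℂ) 1, ‖h w‖ ≤ 1 := by
    intro w hw
    obtain ⟨z, hz1, hz2⟩ := hroot w hw
    set ω : ℂ := Complex.exp (2 * Real.pi * Complex.I / n) with hω
    have hωabs : ‖ω‖ = 1 := by
      have e : (2 * (Real.pi:ℂ) * Complex.I / n) = ((2 * Real.pi / n : ℝ) : ℂ) * Complex.I := by
        push_cast; ring
      rw [hω, e, Complex.norm_exp_ofReal_mul_I]
    have hmemj : ∀ j : ℕ, ω ^ j * z ∈ ball (0:ℂ) 1 := by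
      intro j
      rw [mem_ball_zero_iff] at hz1 ⊢
      rw [norm_mul, norm_pow, hωabs, one_pow, one_mul]
      exact hz1
    have Hsum : HasSum (fun k => ∑ j ∈ Finset.range n, a k * (ω ^ j * z) ^ k)
        (∑ j ∈ Finset.range n, f (ω ^ j * z)) :=
      hasSum_sum fun j _ => hexp _ (hmemj j)
    set F : ℕ → ℂ := fun k => if n ∣ k then (n:ℂ) * (a k * z ^ k) else 0 with hFdef
    have hterm : ∀ k, (∑ j ∈ Finset.range n, a k * (ω ^ j * z) ^ k) = F k := by
      intro k
      have e1 : ∀ j, a k * (ω ^ j * z) ^ k = a k * z ^ k * (ω ^ k) ^ j := by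
        intro j
        rw [mul_pow, ← pow_mul, mul_comm j k, pow_mul]
        ring
      rw [Finset.sum_congr rfl fun j _ => e1 j, ← Finset.mul_sum, hω, rootsum n hn0 k, hFdef]
      by_cases hdvd : n ∣ k <;> simp [hdvd] <;> ring
    have HsumF : HasSum F (∑ j ∈ Finset.range n, f (ω ^ j * z)) := by
      rwa [funext hterm] at Hsum
    have Hh : HasSum (fun m => (n:ℂ) * (b m * w ^ m)) ((n:ℂ) * h w) :=
      (hexp_h w hw).mul_left _
    have hvanish : ∀ k ∉ Set.range (fun m : ℕ => n * m), F k = 0 := by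
      intro k hk
      rw [hFdef]
      simp only [ite_eq_right_iff]
      intro hdvd
      exact absurd ⟨k / n, (Nat.mul_div_cancel' hdvd)⟩ hk
    have hcomp : (F ∘ fun m : ℕ => n * m) = fun m => (n:ℂ) * (b m * w ^ m) := by
      funext m
      show F (n * m) = _
      rw [hFdef]
      simp only [dvd_mul_right, if_true]
      rw [pow_mul, hz2]
    have HsumF2 : HasSum F ((n:ℂ) * h w) := by
      rw [← hinj.hasSum_iff hvanish, hcomp]
      exact Hh
    have heq : (n:ℂ) * h w = ∑ j ∈ Finset.range n, f (ω ^ j * z) := HsumF2.unique HsumF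
    have hbound : ‖(n:ℂ) * h w‖ ≤ n := by
      rw [heq]
      calc ‖∑ j ∈ Finset.range n, f (ω ^ j * z)‖
          ≤ ∑ j ∈ Finset.range n, ‖f (ω ^ j * z)‖ :=
            norm_sum_le _ _
        _ ≤ ∑ j ∈ Finset.range n, 1 := Finset.sum_le_sum fun j _ => hb _ (hmemj j)
        _ = n := by simp
    rw [norm_mul, Complex.norm_natCast] at hbound
    exact (mul_le_iff_le_one_right hnpos).mp hbound
  have := base hexp_h hb_h
  simpa [hbdef] using this
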